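/- Let K ≥ 1, ρ1 > 0, 0 < ρ2 < 1, and P_1,…,P_K > 0; set B = 1 − ρ2, C = ρ1 + ρ2, and f(b) = b/(B b + C). Let 1 ≤ K* ≤ K and ε > 0 satisfy √ε = (∑_{i=1}^{K*} √P_i) / ((K*−1) ρ1 + K* ρ2 + 1), and define b_i* = max(0, (√(P_i/ε) − (ρ1 + ρ2)) / (1 − ρ2)) for i = 1,…,K. If 0 ≤ b_i* ≤ 1 for every i, b_i* > 0 exactly for i ≤ K*, and ∑_{i=1}^K b_i* = 1, then b* maximizes G_1(b) = ∑_{i=1}^K P_i f(b_i) over D = {b ∈ [0,1]^K : ∑_{i=1}^K b_i = 1}. -/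

import Mathlib

/-- Concavity step: tangent line bound for `f(b) = b/(Bb+C)`. -/
lemma concave_step (B C x y : ℝ) (hB : 0 < B) (hC : 0 < C) (hx : 0 ≤ x) (hy : 0 ≤ y) :
    y / (B * y + C) - x / (B * x + C) ≤ C / (B * x + C) ^ 2 * (y - x) := by
  have hdx : 0 < B * x + C := by positivity
  have hdy : 0 < B * y + C := by positivity
  have key : C / (B * x + C) ^ 2 * (y - x) - (y / (B * y + C) - x / (B * x + C))
      = C * B * (y - x) ^ 2 / ((B * x + C) ^ 2 * (B * y + C)) := by
    field_simp
    ring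
  have hnn : 0 ≤ C * B * (y - x) ^ 2 / ((B * x + C) ^ 2 * (B * y + C)) := by positivity
  linarith [key ▸ hnn]

/-- The water-filling-type solution
`b_i* = max(0, (√(P_i/ε) − (ρ₁ + ρ₂))/(1 − ρ₂))`, with `√ε` determined by the
first `K*` files, maximizes the single-transmission policy-2 hit probability
`G₁(b) = ∑ i, P i * f (b i)` over `{b ∈ [0,1]^K : ∑ b i = 1}`. -/
theorem single_transmission_policy2_optimal
    (K : ℕ) (hK : 1 ≤ K)
    (ρ1 ρ2 : ℝ) (hρ1 : 0 < ρ1) (hρ2 : ρ2 ∈ Set.Ioo (0 : ℝ) 1)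
    (P : Fin K → ℝ) (hP : ∀ i, 0 < P i)
    (B C : ℝ) (hB : B = 1 - ρ2) (hC : C = ρ1 + ρ2)
    (f : ℝ → ℝ) (hf : f = fun b => b / (B * b + C))
    (Kstar : ℕ) (hK1 : 1 ≤ Kstar) (hKK : Kstar ≤ K)
    (ε : ℝ) (hε : 0 < ε)
    (hsqrtε : Real.sqrt ε =
      (∑ i ∈ Finset.univ.filter (fun i : Fin K => (i : ℕ) < Kstar), Real.sqrt (P i)) /
        (((Kstar : ℝ) - 1) * ρ1 + (Kstar : ℝ) * ρ2 + 1))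
    (b : Fin K → ℝ)
    (hb : ∀ i, b i = max 0 ((Real.sqrt (P i / ε) - (ρ1 + ρ2)) / (1 - ρ2)))
    (hrange : ∀ i, b i ∈ Set.Icc (0 : ℝ) 1)
    (hsupp : ∀ i : Fin K, 0 < b i ↔ (i : ℕ) < Kstar)
    (hsum : ∑ i, b i = 1) :
    ∀ c : Fin K → ℝ, (∀ i, c i ∈ Set.Icc (0 : ℝ) 1) → ∑ i, c i = 1 →
      ∑ i, P i * f (c i) ≤ ∑ i, P i * f (b i) := by
  intro c hc hcsum
  obtain ⟨hρ2a, hρ2b⟩ := hρ2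
  have hBpos : 0 < B := by rw [hB]; linarith
  have hCpos : 0 < C := by rw [hC]; linarith
  -- per-term bound
  have hterm : ∀ i : Fin K, P i * f (c i) - P i * f (b i) ≤ C * ε * (c i - b i) := by
    intro i
    have hbi0 : 0 ≤ b i := (hrange i).1
    have hci0 : 0 ≤ c i := (hc i).1
    have hcs := concave_step B C (b i) (c i) hBpos hCpos hbi0 hci0
    have hfle : P i * f (c i) - P i * f (b i)
        ≤ P i * (C / (B * b i + C) ^ 2 * (c i - b i)) := by
      rw [hf]
      have := mul_le_mul_of_nonneg_left hcs (hP i).le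
      simp only []
      nlinarith [this]
    rcases lt_or_eq_of_le hbi0 with hpos | hzero
    · -- b i > 0 : multiplier equals C * ε
      have hmax : b i = (Real.sqrt (P i / ε) - (ρ1 + ρ2)) / (1 - ρ2) := by
        have := hb i
        rcases max_choice 0 ((Real.sqrt (P i / ε) - (ρ1 + ρ2)) / (1 - ρ2)) with h | h
        · rw [h] at this; exact absurd this hpos.ne'
        · rw [h] at this; exact this
      rw [← hC, ← hB] at hmax
      have hden : B * b i + C = Real.sqrt (P i / ε) := by
        rw [hmax]
        field_simp
        ring
      have hsq : (Real.sqrt (P i / ε)) ^ 2 = P i / ε :=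
        Real.sq_sqrt (div_nonneg (hP i).le hε.le)
      have hPε : P i * (C / (B * b i + C) ^ 2) = C * ε := by
        rw [hden, hsq]
        field_simp [(hP i).ne']
      calc P i * f (c i) - P i * f (b i)
          ≤ P i * (C / (B * b i + C) ^ 2 * (c i - b i)) := hfle
        _ = P i * (C / (B * b i + C) ^ 2) * (c i - b i) := by ring
        _ = C * ε * (c i - b i) := by rw [hPε]
    · -- b i = 0 : multiplier at most C * ε, and c i - b i ≥ 0
      have hbz : b i = 0 := hzero.symm
      have hle : Real.sqrt (P i / ε) ≤ ρ1 + ρ2 := by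
        have hmb := hb i
        rw [hbz] at hmb
        have hne : (Real.sqrt (P i / ε) - (ρ1 + ρ2)) / (1 - ρ2) ≤ 0 := by
          by_contra h
          push_neg at h
          have := max_eq_right h.le
          rw [this] at hmb
          linarith [hmb ▸ h]
        have h12 : 0 < 1 - ρ2 := by linarith
        have := div_nonpos_iff.mp hne
        rcases this with ⟨h1, h2⟩ | ⟨h1, _⟩
        · linarith
        · linarith
      have hPle : P i ≤ ε * C ^ 2 := by
        have hsq : (Real.sqrt (P i / ε)) ^ 2 = P i / ε :=
          Real.sq_sqrt (div_nonneg (hP i).le hε.le)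
        have hsn : 0 ≤ Real.sqrt (P i / ε) := Real.sqrt_nonneg _
        have : P i / ε ≤ (ρ1 + ρ2) ^ 2 := by nlinarith
        rw [hC]
        have := (div_le_iff₀ hε).mp this
        nlinarith
      have hmul : P i * (C / (B * b i + C) ^ 2) ≤ C * ε := by
        rw [hbz]
        have h0 : P i * (C / (B * 0 + C) ^ 2) = P i / C := by
          field_simp
          ring
        rw [h0]
        rw [div_le_iff₀ hCpos]
        nlinarith
      have hcd : 0 ≤ c i - b i := by rw [hbz]; simpa using hci0
      calc P i * f (c i) - P i * f (b i)
          ≤ P i * (C / (B * b i + C) ^ 2 * (c i - b i)) := hfle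
        _ = P i * (C / (B * b i + C) ^ 2) * (c i - b i) := by ring
        _ ≤ C * ε * (c i - b i) := mul_le_mul_of_nonneg_right hmul hcd
  -- sum up
  have hsumle : ∑ i, (P i * f (c i) - P i * f (b i)) ≤ ∑ i, C * ε * (c i - b i) :=
    Finset.sum_le_sum fun i _ => hterm i
  have h1 : ∑ i, (P i * f (c i) - P i * f (b i))
      = ∑ i, P i * f (c i) - ∑ i, P i * f (b i) := Finset.sum_sub_distrib _ _
  have h2 : ∑ i, C * ε * (c i - b i) = C * ε * (∑ i, c i - ∑ i, b i) := by
    rw [← Finset.mul_sum, Finset.sum_sub_distrib]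
  rw [h1, h2, hcsum, hsum] at hsumle
  simpa using hsumle
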